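/- Let p, q be non-negative integers with p ≤ q − 1, let 0 < c < 1/2, and let a, α₁, …, α_p, β₁, …, β_q be positive real parameters. Define the polynomials 𝐏_n(x) = ₚ₊₂F_q(−n, n+a, α₁, …, α_p; β₁, …, β_q; x) for n ∈ ℤ₊. Then for all complex t, x with |t| < c and |x| < 1/(4c) − 1/2, one has (1−t)^{−a} · ₚ₊₂F_q(a/2, (a+1)/2, α₁, …, α_p; β₁, …, β_q; −4xt/(1−t)²) = Σ_{n=0}^∞ ((a)_n / n!) 𝐏_n(x) tⁿ, where the series on the right converges. -/

import Mathlib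

/-- Pochhammer symbol `(c)_k = c (c+1) ⋯ (c+k-1)`. -/
noncomputable def poch (c : ℂ) (k : ℕ) : ℂ := ∏ j ∈ Finset.range k, (c + j)

lemma poch_zero (c : ℂ) : poch c 0 = 1 := by simp [poch]

lemma poch_succ (c : ℂ) (k : ℕ) : poch c (k + 1) = poch c k * (c + k) := by
  simp [poch, Finset.prod_range_succ]

lemma poch_succ' (c : ℂ) (k : ℕ) : poch c (k + 1) = c * poch (c + 1) k := by
  rw [poch, Finset.prod_range_succ']
  simp only [Nat.cast_zero, add_zero]
  rw [mul_comm, poch]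
  congr 1
  exact Finset.prod_congr rfl fun j _ => by push_cast; ring

lemma poch_add (c : ℂ) (m n : ℕ) : poch c (m + n) = poch c m * poch (c + m) n := by
  simp only [poch, Finset.prod_range_add]
  congr 1
  exact Finset.prod_congr rfl fun j _ => by push_cast; ring

lemma poch_eq_zero_of_lt (n k : ℕ) (h : n < k) : poch (-(n : ℂ)) k = 0 :=
  Finset.prod_eq_zero (Finset.mem_range.mpr h) (by simp)

lemma poch_neg_nat (m k : ℕ) :
    (m.factorial : ℂ) * poch (-((m + k : ℕ) : ℂ)) k = (-1) ^ k * ((m + k).factorial : ℂ) := by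
  induction k with
  | zero => simp [poch_zero]
  | succ k ih =>
    have : ((m + (k+1) : ℕ) : ℂ) = ((m + k : ℕ) : ℂ) + 1 := by push_cast; ring
    rw [this, poch_succ']
    have h2 : -(((m + k : ℕ) : ℂ) + 1) + 1 = -((m + k : ℕ) : ℂ) := by ring
    rw [h2]
    have h3 : ((m + (k+1)).factorial : ℂ) = (((m + k) + 1).factorial : ℂ) := by norm_num [Nat.add_assoc]
    rw [h3]
    push_cast [Nat.factorial_succ] at ih ⊢
    linear_combination (-(((m:ℂ)) + k) - 1) * ih

lemma poch_two_mul (a : ℂ) (k : ℕ) :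
    poch a (2 * k) = 4 ^ k * poch (a / 2) k * poch ((a + 1) / 2) k := by
  induction k with
  | zero => simp [poch_zero]
  | succ k ih =>
    have : 2 * (k + 1) = (2 * k) + 1 + 1 := by ring
    rw [this, poch_succ, poch_succ, poch_succ, poch_succ, ih]
    push_cast
    ring

lemma poch_ofReal (c : ℝ) (k : ℕ) :
    poch (c : ℂ) k = ((∏ j ∈ Finset.range k, (c + j) : ℝ) : ℂ) := by
  push_cast [poch]; rfl

lemma pochR_pos {c : ℝ} (hc : 0 < c) (k : ℕ) : 0 < ∏ j ∈ Finset.range k, (c + j) :=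
  Finset.prod_pos fun j _ => by positivity

open Filter Topology
open scoped ENNReal NNReal

lemma tendsto_linear_ratio (u v : ℝ) {w : ℝ} (hw : 0 < w) :
    Tendsto (fun k : ℕ => (u + w * k) / (v + w * k)) atTop (𝓝 1) := by
  have hden : Tendsto (fun k : ℕ => v + w * k) atTop atTop := by
    apply tendsto_atTop_add_const_left
    exact Tendsto.const_mul_atTop hw tendsto_natCast_atTop_atTop
  have h0 : Tendsto (fun k : ℕ => (u - v) / (v + w * k)) atTop (𝓝 0) :=
    Tendsto.div_atTop tendsto_const_nhds hden
  have h1 : Tendsto (fun k : ℕ => 1 + (u - v) / (v + w * k)) atTop (𝓝 1) := by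
    simpa using tendsto_const_nhds.add h0
  apply h1.congr'
  filter_upwards [hden.eventually_gt_atTop 0] with k hk
  have hne : v + w * k ≠ 0 := ne_of_gt hk
  field_simp
  ring

lemma memball_of_abs_lt {y : ℂ} (hy : ‖y‖ < 1) : y ∈ Metric.eball (0 : ℂ) 1 := by
  rw [Metric.mem_eball, edist_zero_right]
  have : ‖y‖₊ < 1 := by
    rw [← NNReal.coe_lt_coe]
    simpa [coe_nnnorm] using hy
  exact ENNReal.coe_lt_one_iff.mpr this

lemma hasSum_binomial (b : ℂ) {z : ℂ} (hz : ‖z‖ < 1) :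
    HasSum (fun m : ℕ => poch b m / (Nat.factorial m) * z ^ m) ((1 - z) ^ (-b)) := by
  classical
  set c : ℕ → ℂ := fun m => poch b m / (Nat.factorial m) with hc
  have hc0 : c 0 = 1 := by simp [hc, poch_zero]
  have hc1 : c 1 = b := by simp [hc, poch_succ, poch_zero]
  have hrec : ∀ m : ℕ, ((m : ℂ) + 1) * c (m + 1) = (b + m) * c m := by
    intro m
    have hm : ((m.factorial : ℂ)) ≠ 0 := by exact_mod_cast m.factorial_ne_zero
    have hfac : (((m+1).factorial : ℂ)) = (m.factorial : ℂ) * ((m : ℂ) + 1) := by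
      push_cast [Nat.factorial_succ]; ring
    have hne : ((m : ℂ) + 1) ≠ 0 := Nat.cast_add_one_ne_zero m
    simp only [hc]
    rw [poch_succ, hfac]
    field_simp
  set q : FormalMultilinearSeries ℂ ℂ ℂ := FormalMultilinearSeries.ofScalars ℂ c with hq
  have hnorm : ∀ n, ‖q n‖ = ‖c n‖ := fun n => by rw [hq]; simp only [FormalMultilinearSeries.ofScalars_norm]
  have hrad : 1 ≤ q.radius := by
    refine ENNReal.le_of_forall_nnreal_lt fun r hr => q.le_radius_of_summable_norm ?_
    have hr1 : (r : ℝ) < 1 := by exact_mod_cast hr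
    have hr0 : (0 : ℝ) ≤ r := r.coe_nonneg
    set r' : ℝ := ((r : ℝ) + 1) / 2 with hr'
    have hr'1 : r' < 1 := by rw [hr']; linarith
    apply summable_of_ratio_norm_eventually_le hr'1
    have htend : Tendsto (fun n : ℕ => (‖b‖ + 1 * n) / (1 + 1 * n) * r) atTop (𝓝 (1 * r)) :=
      (tendsto_linear_ratio ‖b‖ 1 one_pos).mul_const (r : ℝ)
    have hev : ∀ᶠ n : ℕ in atTop, (‖b‖ + 1 * n) / (1 + 1 * n) * r < r' :=
      htend.eventually_lt_const (by rw [hr']; linarith)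
    filter_upwards [hev] with n hn
    have hne : ((n : ℂ) + 1) ≠ 0 := Nat.cast_add_one_ne_zero n
    have hcval : c (n + 1) = (b + n) * c n / ((n : ℂ) + 1) := by
      field_simp
      linear_combination hrec n
    have hnrm : ‖c (n + 1)‖ ≤ (‖b‖ + n) / (n + 1) * ‖c n‖ := by
      rw [hcval]
      rw [norm_div, norm_mul]
      have h1 : ‖(n : ℂ) + 1‖ = (n : ℝ) + 1 := by
        have : ((n : ℂ) + 1) = (((n : ℝ) + 1 : ℝ) : ℂ) := by push_cast; ring
        rw [this, Complex.norm_real, Real.norm_of_nonneg (by positivity)]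
      have h2 : ‖b + (n : ℂ)‖ ≤ ‖b‖ + n := by
        calc ‖b + (n : ℂ)‖ ≤ ‖b‖ + ‖(n : ℂ)‖ := norm_add_le _ _
        _ = ‖b‖ + n := by norm_num [Complex.norm_natCast]
      rw [h1, div_le_iff₀ (by positivity), div_mul_eq_mul_div, div_mul_eq_mul_div,
        le_div_iff₀ (by positivity)]
      exact mul_le_mul_of_nonneg_right
        (mul_le_mul_of_nonneg_right h2 (norm_nonneg (c n))) (by positivity)
    rw [hnorm, hnorm, Real.norm_of_nonneg (by positivity), Real.norm_of_nonneg (by positivity)]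
    calc ‖c (n+1)‖ * (r : ℝ) ^ (n+1) = (‖c (n+1)‖ * (r:ℝ)^n) * r := by ring
    _ ≤ (((‖b‖ + n) / (n + 1) * ‖c n‖) * (r:ℝ)^n) * r := by
        have := mul_le_mul_of_nonneg_right hnrm (by positivity : (0:ℝ) ≤ (r:ℝ)^n)
        exact mul_le_mul_of_nonneg_right this hr0
    _ = ((‖b‖ + 1*n) / (1 + 1*n) * r) * (‖c n‖ * (r:ℝ)^n) := by ring
    _ ≤ r' * (‖c n‖ * (r:ℝ)^n) := mul_le_mul_of_nonneg_right hn.le (by positivity)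
  have hradpos : (0 : ℝ≥0∞) < q.radius := lt_of_lt_of_le one_pos hrad
  have hqball : HasFPowerSeriesOnBall q.sum q 0 1 :=
    (q.hasFPowerSeriesOnBall hradpos).mono one_pos hrad
  set f : ℂ → ℂ := q.sum with hf
  have hsum : ∀ {y : ℂ}, ‖y‖ < 1 → HasSum (fun n => c n * y ^ n) (f y) := by
    intro y hy
    have h := hqball.hasSum (memball_of_abs_lt hy)
    simp only [zero_add] at h
    apply h.congr_fun
    intro n
    rw [hq, FormalMultilinearSeries.ofScalars_apply_eq, smul_eq_mul]
  have hf0 : f 0 = 1 := by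
    have h := hsum (by simp : ‖(0:ℂ)‖ < 1)
    have h1 : HasSum (fun n : ℕ => c n * (0:ℂ) ^ n) (c 0 * (0:ℂ) ^ 0) :=
      hasSum_single 0 (fun m hm => by simp [zero_pow hm])
    have := h.unique h1
    simpa [hc0] using this
  have key : ∀ y : ℂ, ‖y‖ < 1 → (1 - y) * deriv f y = b * f y := by
    intro y hy
    have hds := (hqball.fderiv).hasSum (memball_of_abs_lt hy)
    simp only [zero_add] at hds
    have hds2 := (ContinuousLinearMap.apply ℂ ℂ y).hasSum hds
    have hterm : ∀ n : ℕ, (ContinuousLinearMap.apply ℂ ℂ y) (q.derivSeries n fun _ => y)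
        = ((n : ℂ) + 1) * c (n + 1) * y ^ (n + 1) := by
      intro n
      have h1 : (ContinuousLinearMap.apply ℂ ℂ y) (q.derivSeries n fun _ => y)
          = (q.derivSeries n fun _ => y) y := rfl
      rw [h1, q.derivSeries_apply_diag, FormalMultilinearSeries.ofScalars_apply_eq]
      push_cast
      simp only [nsmul_eq_mul, smul_eq_mul]
      push_cast
      ring
    have htarget : (ContinuousLinearMap.apply ℂ ℂ y) (fderiv ℂ f y) = y * deriv f y := by
      have h1 : (ContinuousLinearMap.apply ℂ ℂ y) (fderiv ℂ f y) = (fderiv ℂ f y) y := rfl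
      rw [h1]
      have h2 : (fderiv ℂ f y) y = y • ((fderiv ℂ f y) 1) := by
        rw [← ContinuousLinearMap.map_smul, smul_eq_mul, mul_one]
      rw [h2, fderiv_apply_one_eq_deriv, smul_eq_mul]
    rw [htarget] at hds2
    have hY : HasSum (fun n : ℕ => ((n : ℂ) + 1) * c (n + 1) * y ^ (n + 1)) (y * deriv f y) :=
      hds2.congr_fun fun n => (hterm n).symm
    -- reindex to m * c m * y ^ m
    set g0 : ℕ → ℂ := fun m => (m : ℂ) * c m * y ^ m with hg0
    have hY' : HasSum g0 (y * deriv f y) := by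
      have h1 : HasSum (fun n : ℕ => g0 (n + 1)) (y * deriv f y) := by
        apply hY.congr_fun
        intro n
        simp only [hg0]
        push_cast
        ring
      have h2 := (hasSum_nat_add_iff 1).mp h1
      simpa [hg0] using h2
    have S3 := (hsum hy).mul_left b
    have S4 := S3.add hY'
    have S4' : HasSum (fun n : ℕ => ((n : ℂ) + 1) * c (n + 1) * y ^ n)
        (b * f y + y * deriv f y) := by
      apply S4.congr_fun
      intro n
      simp only [hg0]
      linear_combination y ^ n * hrec n
    rcases eq_or_ne y 0 with rfl | hy0
    · -- at 0 : deriv f 0 = c 1 = b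
      have hd0 : deriv f 0 = q.coeff 1 := (hqball.hasFPowerSeriesAt).deriv
      have hco : q.coeff 1 = c 1 := by
        simp [hq, FormalMultilinearSeries.coeff, FormalMultilinearSeries.ofScalars,
          List.prod]
      rw [hd0, hco, hc1, hf0]
      ring
    · have S2' : HasSum (fun n : ℕ => ((n : ℂ) + 1) * c (n + 1) * y ^ n) (deriv f y) := by
        have := hY.mul_left y⁻¹
        rw [inv_mul_cancel_left₀ hy0] at this
        apply this.congr_fun
        intro n
        rw [pow_succ]
        field_simp
      have huniq := S2'.unique S4'
      linear_combination huniq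
  -- constancy of f y * (1 - y)^b on the ball
  have hne1 : ∀ {y : ℂ}, ‖y‖ < 1 → (1 : ℂ) - y ≠ 0 := by
    intro y hy h
    have : y = 1 := by linear_combination -h
    rw [this] at hy; simp at hy
  set g : ℂ → ℂ := fun y => f y * (1 - y) ^ b with hg
  have hgderiv : ∀ y ∈ Metric.ball (0:ℂ) 1, HasDerivAt g 0 y := by
    intro y hy
    have hy' : ‖y‖ < 1 := by simpa [Complex.dist_eq] using Metric.mem_ball.mp hy
    have hana : AnalyticAt ℂ f y := hqball.analyticAt_of_mem (memball_of_abs_lt hy')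
    have hdf : HasDerivAt f (deriv f y) y := hana.differentiableAt.hasDerivAt
    have h1y : (1 - y) ∈ Complex.slitPlane := by
      rw [Complex.mem_slitPlane_iff]
      left
      have : |y.re| ≤ ‖y‖ := Complex.abs_re_le_norm y
      simp only [Complex.sub_re, Complex.one_re]
      have := abs_le.mp this
      linarith
    have hcp : HasDerivAt (fun w : ℂ => (1 - w) ^ b) (b * (1 - y) ^ (b - 1) * (-1)) y :=
      HasDerivAt.cpow_const ((hasDerivAt_id y).const_sub 1) h1y
    have hprod := hdf.mul hcp
    have hval : deriv f y * (1 - y) ^ b + f y * (b * (1 - y) ^ (b - 1) * (-1)) = 0 := by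
      have hsplit : (1 - y) ^ b = (1 - y) ^ (b - 1) * (1 - y) := by
        conv_lhs => rw [show b = (b - 1) + 1 by ring]
        rw [Complex.cpow_add _ _ (hne1 hy'), Complex.cpow_one]
      rw [hsplit]
      linear_combination (1 - y) ^ (b - 1) * key y hy'
    rw [hval] at hprod
    exact hprod
  have hgconst : ∀ y ∈ Metric.ball (0:ℂ) 1, g y = g 0 := by
    intro y hy
    have hdiffon : DifferentiableOn ℂ g (Metric.ball (0:ℂ) 1) :=
      fun w hw => ((hgderiv w hw).differentiableAt).differentiableWithinAt
    have hfd0 : ∀ w ∈ Metric.ball (0:ℂ) 1, fderivWithin ℂ g (Metric.ball (0:ℂ) 1) w = 0 := by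
      intro w hw
      rw [fderivWithin_of_isOpen Metric.isOpen_ball hw]
      have hF : HasFDerivAt g (0 : ℂ →L[ℂ] ℂ) w := by
        have h := (hgderiv w hw).hasFDerivAt
        have h0 : ContinuousLinearMap.toSpanSingleton ℂ (0 : ℂ) = 0 := by
          ext x; simp
        rwa [h0] at h
      exact hF.fderiv
    exact (convex_ball (0:ℂ) 1).is_const_of_fderivWithin_eq_zero hdiffon hfd0 hy
      (Metric.mem_ball_self one_pos)
  have hzball : z ∈ Metric.ball (0:ℂ) 1 := by
    simp [Metric.mem_ball, Complex.dist_eq]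
    exact hz
  have hgz : f z * (1 - z) ^ b = 1 := by
    have := hgconst z hzball
    simp only [hg] at this
    rw [this, hf0, sub_zero, Complex.one_cpow, one_mul]
  have hfz : f z = (1 - z) ^ (-b) := by
    rw [Complex.cpow_neg]
    exact eq_inv_of_mul_eq_one_left (by linear_combination hgz)
  have := hsum hz
  rw [hfz] at this
  exact this


set_option maxHeartbeats 1000000

/-- The polynomials `𝐏_n(x) = ₚ₊₂F_q(-n, n+a, α₁,…,α_p; β₁,…,β_q; x)`
(the series terminates since `(-n)_k = 0` for `k > n`). -/
noncomputable def bP (p q : ℕ) (a : ℝ) (α : Fin p → ℝ) (β : Fin q → ℝ)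
    (n : ℕ) (x : ℂ) : ℂ :=
  ∑' k : ℕ, poch (-(n : ℂ)) k * poch ((n : ℂ) + a) k * (∏ i, poch (α i) k) /
      (∏ j, poch (β j) k) * x ^ k / (Nat.factorial k)

theorem stmt_1 (p q : ℕ) (hpq : p + 1 ≤ q) (c : ℝ) (hc1 : 0 < c) (hc2 : c < 1/2)
    (a : ℝ) (ha : 0 < a) (α : Fin p → ℝ) (β : Fin q → ℝ)
    (hα : ∀ i, 0 < α i) (hβ : ∀ j, 0 < β j)
    (t x : ℂ) (ht : ‖t‖ < c) (hx : ‖x‖ < 1/(4*c) - 1/2) :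
    HasSum (fun n : ℕ => poch (a : ℂ) n / (Nat.factorial n) * bP p q a α β n x * t ^ n)
      ((1 - t) ^ (-(a : ℂ)) *
        ∑' k : ℕ, poch ((a : ℂ)/2) k * poch (((a : ℂ)+1)/2) k * (∏ i, poch (α i) k) /
          (∏ j, poch (β j) k) * (-(4*x*t/(1-t)^2)) ^ k / (Nat.factorial k)) := by
  classical
  have ht1 : ‖t‖ < 1 := lt_trans ht (by linarith)
  have htT : ‖t‖ < 1 := ht1
  have hTnn : (0:ℝ) ≤ ‖t‖ := norm_nonneg t
  have h1mt : (0:ℝ) < 1 - ‖t‖ := by linarith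
  have hne_t : (1:ℂ) - t ≠ 0 := by
    intro h
    have : t = 1 := by linear_combination -h
    rw [this] at ht1; simp at ht1
  -- nonvanishing facts
  have hk! : ∀ k : ℕ, ((Nat.factorial k : ℂ)) ≠ 0 := fun k => by
    exact_mod_cast k.factorial_ne_zero
  have hpochβ : ∀ k, (∏ j, poch ((β j : ℝ) : ℂ) k) ≠ 0 := by
    intro k
    apply Finset.prod_ne_zero_iff.mpr
    intro j _
    rw [poch_ofReal]
    exact_mod_cast (pochR_pos (hβ j) k).ne'
  have hpocha : ∀ m, poch ((a:ℝ):ℂ) m ≠ 0 := fun m => by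
    rw [poch_ofReal]; exact_mod_cast (pochR_pos ha m).ne'
  -- the double-indexed family
  set s : ℕ → ℕ → ℂ := fun n k =>
    poch (-(n : ℂ)) k * poch ((n : ℂ) + a) k * (∏ i, poch ((α i : ℝ) : ℂ) k) /
      (∏ j, poch ((β j : ℝ) : ℂ) k) * x ^ k / (Nat.factorial k) with hs
  set F : ℕ × ℕ → ℂ := fun nk => poch ((a:ℝ):ℂ) nk.1 / (Nat.factorial nk.1) * s nk.1 nk.2 * t ^ nk.1
    with hF
  set c' : ℕ → ℂ := fun k =>
    poch ((a:ℝ):ℂ) (2*k) * ((∏ i, poch ((α i : ℝ) : ℂ) k) / (∏ j, poch ((β j : ℝ) : ℂ) k)) *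
      x ^ k * (-t) ^ k / (Nat.factorial k) with hc'
  -- STEP A : key algebraic identity
  have keyalg : ∀ m k : ℕ, F (m + k, k)
      = c' k * (poch ((a:ℂ) + 2*k) m / (Nat.factorial m) * t ^ m) := by
    intro m k
    have hm! : ((Nat.factorial m : ℂ)) ≠ 0 := hk! m
    have hmk! : ((Nat.factorial (m+k) : ℂ)) ≠ 0 := hk! (m+k)
    have hv1 : poch (-((m+k : ℕ) : ℂ)) k
        = (-1)^k * ((Nat.factorial (m+k) : ℂ)) / ((Nat.factorial m : ℂ)) := by
      rw [eq_div_iff hm!]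
      linear_combination poch_neg_nat m k
    have e1 : poch ((a:ℝ):ℂ) (2*k + m)
        = poch ((a:ℝ):ℂ) (m+k) * poch (((a:ℝ):ℂ) + ((m+k : ℕ) : ℂ)) k := by
      rw [show 2*k + m = (m+k) + k by ring]
      exact poch_add _ _ _
    have e2 : poch ((a:ℝ):ℂ) (2*k + m)
        = poch ((a:ℝ):ℂ) (2*k) * poch (((a:ℝ):ℂ) + 2*(k:ℂ)) m := by
      have h := poch_add ((a:ℝ):ℂ) (2*k) m
      rwa [show (((2*k : ℕ)) : ℂ) = 2*(k:ℂ) by push_cast; ring] at h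
    have hv2 : poch (((m+k : ℕ) : ℂ) + (a:ℂ)) k
        = poch ((a:ℝ):ℂ) (2*k) * poch (((a:ℝ):ℂ) + 2*(k:ℂ)) m / poch ((a:ℝ):ℂ) (m+k) := by
      rw [show (((m+k : ℕ) : ℂ) + (a:ℂ)) = ((a:ℂ) + ((m+k : ℕ) : ℂ)) from add_comm _ _,
        eq_div_iff (hpocha (m+k))]
      linear_combination e2 - e1
    show poch ((a:ℝ):ℂ) (m+k) / (Nat.factorial (m+k)) * s (m+k) k * t ^ (m+k) = _
    rw [hs]
    simp only
    rw [hv1, hv2, hc']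
    simp only
    rw [pow_add t m k, neg_pow t k]
    rw [div_mul_eq_mul_div, div_mul_eq_mul_div, div_eq_iff hmk!]
    field_simp [hpocha (m+k), hk!, hpochβ k]
  -- STEP B : inner complex sums
  have stepB : ∀ k : ℕ, HasSum (fun m => F (m + k, k))
      (c' k * (1 - t) ^ (-((a:ℂ) + 2*k))) := by
    intro k
    exact ((hasSum_binomial ((a:ℂ) + 2*k) ht1).mul_left (c' k)).congr_fun fun m => keyalg m k
  -- STEP C : norms
  set B : ℕ → ℝ := fun k => (1 - ‖t‖) ^ (-(a + 2*(k:ℝ))) with hB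
  have hBpos : ∀ k, 0 < B k := fun k => Real.rpow_pos_of_pos h1mt _
  have hcast : ∀ k : ℕ, ((a:ℂ) + 2*(k:ℂ)) = (((a + 2*(k:ℝ)) : ℝ) : ℂ) := by
    intro k; push_cast; ring
  have hBsum : ∀ k : ℕ, HasSum (fun m => (∏ j ∈ Finset.range m, (a + 2*(k:ℝ) + j)) /
      (Nat.factorial m) * ‖t‖ ^ m) (B k) := by
    intro k
    have h := hasSum_binomial ((a:ℂ) + 2*(k:ℂ)) (z := ((‖t‖ : ℝ) : ℂ))
      (by rwa [Complex.norm_of_nonneg hTnn])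
    have hval : ((1:ℂ) - ((‖t‖:ℝ):ℂ)) ^ (-((a:ℂ) + 2*(k:ℂ))) = ((B k : ℝ) : ℂ) := by
      rw [hB]
      rw [show ((1:ℂ) - ((‖t‖:ℝ):ℂ)) = (((1 - ‖t‖ : ℝ)):ℂ) by push_cast; ring,
        show (-((a:ℂ) + 2*(k:ℂ))) = (((-(a + 2*(k:ℝ))):ℝ):ℂ) by push_cast; ring,
        ← Complex.ofReal_cpow h1mt.le]
    rw [hval] at h
    rw [← Complex.hasSum_ofReal]
    apply h.congr_fun
    intro m
    rw [hcast k, poch_ofReal]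
    push_cast
    ring
  have hnorm_term : ∀ (k m : ℕ), ‖F (m + k, k)‖
      = ‖c' k‖ * ((∏ j ∈ Finset.range m, (a + 2*(k:ℝ) + j)) / (Nat.factorial m) * ‖t‖ ^ m) := by
    intro k m
    rw [keyalg m k, norm_mul]
    congr 1
    rw [norm_mul, norm_div, norm_pow, hcast k, poch_ofReal, Complex.norm_real,
      Real.norm_of_nonneg (Finset.prod_nonneg fun j _ => by positivity)]
    congr 2
    rw [Complex.norm_natCast]
  set v : ℕ → ℝ := fun k => ‖c' k‖ * B k with hv
  have hNin : ∀ k, HasSum (fun m => ‖F (m + k, k)‖) (v k) := fun k =>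
    ((hBsum k).mul_left ‖c' k‖).congr_fun fun m => hnorm_term k m
  -- STEP D : ratio test
  have hvsummable : Summable v := by
    have htc : ‖t‖ < c := ht
    have hxc : ‖x‖ < 1/(4*c) - 1/2 := hx
    have hβprodC : ∀ k : ℕ, (∏ j, ((β j : ℂ) + (k:ℂ))) ≠ 0 := by
      intro k
      apply Finset.prod_ne_zero_iff.mpr
      intro j _
      rw [show ((β j : ℂ) + (k:ℂ)) = (((β j + k : ℝ)) : ℂ) by push_cast; ring]
      exact_mod_cast (by have := hβ j; positivity : (0:ℝ) < β j + k).ne'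
    set Dd : ℕ → ℂ := fun k => ((a:ℂ) + 2*k) * ((a:ℂ) + 2*k + 1) *
      ((∏ i, ((α i : ℂ) + (k:ℂ))) / (∏ j, ((β j : ℂ) + (k:ℂ)))) * x * (-t) / ((k:ℂ) + 1)
      with hDd
    have hrecc' : ∀ k : ℕ, c' (k+1) = c' k * Dd k := by
      intro k
      rw [hc']
      simp only
      rw [show 2*(k+1) = (2*k)+1+1 by ring, poch_succ, poch_succ]
      rw [show (∏ i, poch ((α i : ℝ):ℂ) (k+1))
          = (∏ i, poch ((α i : ℝ):ℂ) k) * (∏ i, ((α i : ℂ) + (k:ℂ))) by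
        rw [← Finset.prod_mul_distrib]; exact Finset.prod_congr rfl fun i _ => poch_succ _ _]
      rw [show (∏ j, poch ((β j : ℝ):ℂ) (k+1))
          = (∏ j, poch ((β j : ℝ):ℂ) k) * (∏ j, ((β j : ℂ) + (k:ℂ))) by
        rw [← Finset.prod_mul_distrib]; exact Finset.prod_congr rfl fun j _ => poch_succ _ _]
      rw [hDd]
      simp only
      rw [pow_succ x k, pow_succ (-t) k,
        show ((Nat.factorial (k+1) : ℂ)) = (Nat.factorial k : ℂ) * ((k:ℂ)+1) by
          push_cast [Nat.factorial_succ]; ring]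
      have hk1 : ((k:ℂ)+1) ≠ 0 := Nat.cast_add_one_ne_zero k
      field_simp [hk!, hpochβ k, hβprodC k]
      push_cast
      ring
    have hBrec : ∀ k : ℕ, B (k+1) = B k * (1 - ‖t‖) ^ (-(2:ℝ)) := by
      intro k
      rw [hB]
      simp only
      rw [← Real.rpow_add h1mt]
      congr 1
      push_cast
      ring
    set R : ℕ → ℝ := fun k => ‖Dd k‖ * (1 - ‖t‖) ^ (-(2:ℝ)) with hR
    have hvrec : ∀ k : ℕ, v (k+1) = v k * R k := by
      intro k
      rw [hv]; simp only
      rw [hrecc' k, norm_mul, hBrec k, hR]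
      ring
    set dd : ℕ → ℝ := fun k => (a + 2*(k:ℝ)) * (a + 2*(k:ℝ) + 1) *
      ((∏ i, (α i + (k:ℝ))) / (∏ j, (β j + (k:ℝ)))) / ((k:ℝ) + 1) with hdd
    have hddpos : ∀ k : ℕ, 0 ≤ dd k := by
      intro k; rw [hdd]; simp only
      have h1 : (0:ℝ) ≤ ∏ i, (α i + (k:ℝ)) :=
        Finset.prod_nonneg fun i _ => by have := hα i; positivity
      have h2 : (0:ℝ) ≤ ∏ j, (β j + (k:ℝ)) :=
        Finset.prod_nonneg fun j _ => by have := hβ j; positivity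
      positivity
    have hDdnorm : ∀ k : ℕ, ‖Dd k‖ = dd k * (‖x‖ * ‖t‖) := by
      intro k
      have hcastdd : Dd k = ((dd k : ℝ) : ℂ) * (x * (-t)) := by
        rw [hDd, hdd]; push_cast; ring
      rw [hcastdd, norm_mul, norm_mul, norm_neg, Complex.norm_real,
        Real.norm_of_nonneg (hddpos k)]
    have hq0 : 0 < q := by omega
    set j0 : Fin q := ⟨0, hq0⟩ with hj0
    set ι : Fin p → Fin q := fun i => ⟨i.1 + 1, by omega⟩ with hι
    have ιinj : Function.Injective ι := by
      intro i i' h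
      apply Fin.ext
      simpa [hι, Fin.ext_iff] using h
    have hj0ι : j0 ∉ Finset.image ι Finset.univ := by
      simp only [Finset.mem_image, not_exists]
      intro i
      simp [hι, hj0, Fin.ext_iff]
    set T : Finset (Fin q) := insert j0 (Finset.image ι Finset.univ) with hT
    set S : Finset (Fin q) := Finset.univ \ T with hSdef
    have hβprodR : ∀ k : ℕ, (∏ j, (β j + (k:ℝ)))
        = ((β j0 + (k:ℝ)) * ∏ i, (β (ι i) + (k:ℝ))) * ∏ j ∈ S, (β j + (k:ℝ)) := by
      intro k
      rw [← Finset.prod_sdiff (Finset.subset_univ T), ← hSdef, hT,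
        Finset.prod_insert hj0ι, Finset.prod_image (fun i _ i' _ h => ιinj h)]
      ring
    have hdd_eq : ∀ k : ℕ, dd k
        = 4 * ((a + 2*(k:ℝ)) / (2 + 2*(k:ℝ))) * (((a+1) + 2*(k:ℝ)) / (2*(β j0) + 2*(k:ℝ)))
          * (∏ i, (α i + (k:ℝ)) / (β (ι i) + (k:ℝ))) * (∏ j ∈ S, ((β j + (k:ℝ)))⁻¹) := by
      intro k
      have eβ0 : (β j0 + (k:ℝ)) ≠ 0 := by have := hβ j0; positivity
      have eβι : (∏ i, (β (ι i) + (k:ℝ))) ≠ 0 :=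
        (Finset.prod_pos fun i _ => by have := hβ (ι i); positivity).ne'
      have eS : (∏ j ∈ S, (β j + (k:ℝ))) ≠ 0 :=
        (Finset.prod_pos fun j _ => by have := hβ j; positivity).ne'
      have ek1 : ((k:ℝ) + 1) ≠ 0 := by positivity
      have key : ∀ (A A' Pa b0 Pb PS K : ℝ), b0 ≠ 0 → Pb ≠ 0 → PS ≠ 0 → K ≠ 0 →
          A * A' * (Pa / ((b0 * Pb) * PS)) / K
            = 4 * (A / (2*K)) * (A' / (2*b0)) * (Pa / Pb) * PS⁻¹ := by
        intro A A' Pa b0 Pb PS K h1 h2 h3 h4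
        field_simp
        ring
      rw [hdd]; simp only
      rw [hβprodR k, Finset.prod_div_distrib, Finset.prod_inv_distrib,
        show (2:ℝ) + 2*(k:ℝ) = 2*((k:ℝ)+1) by ring,
        show 2*(β j0) + 2*(k:ℝ) = 2*(β j0 + (k:ℝ)) by ring,
        show (a+1) + 2*(k:ℝ) = a + 2*(k:ℝ) + 1 by ring]
      exact key _ _ _ _ _ _ _ eβ0 eβι eS ek1
    have t1 : Filter.Tendsto (fun k : ℕ => (a + 2*(k:ℝ)) / (2 + 2*(k:ℝ)))
        Filter.atTop (𝓝 1) := tendsto_linear_ratio a 2 two_pos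
    have t2 : Filter.Tendsto (fun k : ℕ => ((a+1) + 2*(k:ℝ)) / (2*(β j0) + 2*(k:ℝ)))
        Filter.atTop (𝓝 1) := tendsto_linear_ratio (a+1) (2*(β j0)) two_pos
    have t3 : Filter.Tendsto (fun k : ℕ => ∏ i, (α i + (k:ℝ)) / (β (ι i) + (k:ℝ)))
        Filter.atTop (𝓝 (∏ _i : Fin p, (1:ℝ))) := by
      apply tendsto_finset_prod
      intro i _
      simpa using tendsto_linear_ratio (α i) (β (ι i)) one_pos
    have t4 : Filter.Tendsto (fun k : ℕ => ∏ j ∈ S, ((β j + (k:ℝ)))⁻¹)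
        Filter.atTop (𝓝 (∏ _j ∈ S, (0:ℝ))) := by
      apply tendsto_finset_prod
      intro j _
      have hden : Filter.Tendsto (fun k : ℕ => β j + (k:ℝ)) Filter.atTop Filter.atTop := by
        apply tendsto_atTop_add_const_left
        exact tendsto_natCast_atTop_atTop
      exact hden.inv_tendsto_atTop
    set W : ℝ := ∏ _j ∈ S, (0:ℝ) with hW
    have hWnn : 0 ≤ W := Finset.prod_nonneg fun _ _ => le_rfl
    have hW1 : W ≤ 1 := Finset.prod_le_one (fun _ _ => le_rfl) (fun _ _ => zero_le_one)
    set L : ℝ := (4 * 1 * 1 * (∏ _i : Fin p, (1:ℝ)) * W) * (‖x‖ * ‖t‖ * (1 - ‖t‖) ^ (-(2:ℝ)))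
      with hL
    have hddt : Filter.Tendsto dd Filter.atTop (𝓝 (4 * 1 * 1 * (∏ _i : Fin p, (1:ℝ)) * W)) := by
      have hcomb := ((((tendsto_const_nhds (x := (4:ℝ)) (f := Filter.atTop)).mul t1).mul t2).mul
        t3).mul t4
      exact Filter.Tendsto.congr (fun k => (hdd_eq k).symm) hcomb
    have hRt : Filter.Tendsto R Filter.atTop (𝓝 L) := by
      have h := hddt.mul_const (‖x‖ * ‖t‖ * (1 - ‖t‖) ^ (-(2:ℝ)))
      rw [hL]
      apply Filter.Tendsto.congr ?_ h
      intro k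
      rw [hR]; simp only; rw [hDdnorm k]; ring
    have hw2 : (1 - ‖t‖) ^ (-(2:ℝ)) = ((1 - ‖t‖)^2)⁻¹ := by
      rw [show (-(2:ℝ)) = -((2:ℕ):ℝ) by norm_num, Real.rpow_neg h1mt.le, Real.rpow_natCast]
    have hX4 : 4*c*‖x‖ < 1 - 2*c := by
      have h := mul_lt_mul_of_pos_left hxc (by linarith : (0:ℝ) < 4*c)
      have h2 : 4*c*(1/(4*c) - 1/2) = 1 - 2*c := by field_simp; ring
      linarith [h, h2.ge, h2.le]
    have hρ : 4*‖x‖*‖t‖*((1-‖t‖)^2)⁻¹ < 1 := by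
      rw [← div_eq_mul_inv, div_lt_one (by positivity)]
      nlinarith [mul_le_mul_of_nonneg_right hX4.le hTnn, htc, hc1, hTnn,
        norm_nonneg x, mul_nonneg hc1.le (sq_nonneg ‖t‖)]
    have hLlt : L < 1 := by
      rw [hL, Finset.prod_const_one, hw2]
      have hρ0 : (0:ℝ) ≤ 4*‖x‖*‖t‖*((1-‖t‖)^2)⁻¹ := by positivity
      nlinarith [hρ, hρ0, hWnn, hW1]
    have hv0 : ∀ k, 0 ≤ v k := fun k => mul_nonneg (norm_nonneg _) (hBpos k).le
    apply summable_of_ratio_norm_eventually_le (r := (L+1)/2) (by linarith)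
    filter_upwards [hRt.eventually_lt_const (show L < (L+1)/2 by linarith)] with k hk
    rw [Real.norm_of_nonneg (hv0 _), Real.norm_of_nonneg (hv0 _), hvrec k]
    calc v k * R k ≤ v k * ((L+1)/2) := mul_le_mul_of_nonneg_left hk.le (hv0 k)
    _ = (L+1)/2 * v k := by ring
  -- STEP E : summability of the double series
  have hNsum : Summable (fun km : ℕ × ℕ => ‖F (km.2 + km.1, km.1)‖) := by
    refine (summable_prod_of_nonneg (fun _ => norm_nonneg _)).mpr
      ⟨fun k => (hNin k).summable, ?_⟩
    apply hvsummable.congr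
    intro k
    exact ((hNin k).tsum_eq).symm
  have hF2sum : Summable (fun km : ℕ × ℕ => F (km.2 + km.1, km.1)) :=
    Summable.of_norm hNsum
  set SS : ℂ := ∑' km : ℕ × ℕ, F (km.2 + km.1, km.1) with hSS
  have hF2 : HasSum (fun km : ℕ × ℕ => F (km.2 + km.1, km.1)) SS := hF2sum.hasSum
  -- STEP F : sum over k fibers
  have hg : HasSum (fun k => c' k * (1 - t) ^ (-((a:ℂ) + 2*k))) SS :=
    hF2.prod_fiberwise fun k => stepB k
  -- STEP G : transfer to the full plane
  have hfull : HasSum F SS := by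
    have einj : Function.Injective (fun km : ℕ × ℕ => (km.2 + km.1, km.1)) := by
      intro u w h
      rw [Prod.ext_iff] at h
      obtain ⟨h1, h2⟩ := h
      simp only at h1 h2
      exact Prod.ext h2 (by omega)
    have hvan : ∀ nk : ℕ × ℕ, nk ∉ Set.range (fun km : ℕ × ℕ => (km.2 + km.1, km.1)) →
        F nk = 0 := by
      intro ⟨n, k⟩ hnk
      have hlt : n < k := by
        by_contra hle
        exact hnk ⟨(k, n - k), by simp; omega⟩
      have : poch (-(n : ℂ)) k = 0 := poch_eq_zero_of_lt n k hlt
      simp only [hF, hs, this, zero_mul, mul_zero, zero_div]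
    exact (einj.hasSum_iff hvan).mp hF2
  -- STEP H : sum over n fibers gives LHS
  have hLn : ∀ n : ℕ, HasSum (fun k => F (n, k))
      (poch ((a:ℝ):ℂ) n / (Nat.factorial n) * bP p q a α β n x * t ^ n) := by
    intro n
    have hssum : Summable (fun k => s n k) := by
      apply summable_of_ne_finset_zero (s := Finset.range (n+1))
      intro k hk
      have hlt : n < k := by simpa using hk
      rw [hs]
      simp only [poch_eq_zero_of_lt n k hlt, zero_mul, mul_zero, zero_div]
    have hbp : HasSum (fun k => s n k) (bP p q a α β n x) := by
      have h := hssum.hasSum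
      have heq : bP p q a α β n x = ∑' k, s n k := by
        rw [bP, hs]
      rwa [← heq] at h
    have h2 := hbp.mul_left (poch ((a:ℝ):ℂ) n / (Nat.factorial n) * t ^ n)
    have h3 : HasSum (fun k => F (n, k))
        (poch ((a:ℝ):ℂ) n / (Nat.factorial n) * t ^ n * bP p q a α β n x) := by
      apply h2.congr_fun
      intro k
      rw [hF]
      simp only
      ring
    have h4 : poch ((a:ℝ):ℂ) n / (Nat.factorial n) * t ^ n * bP p q a α β n x
        = poch ((a:ℝ):ℂ) n / (Nat.factorial n) * bP p q a α β n x * t ^ n := by ring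
    rwa [h4] at h3
  have hLHS : HasSum (fun n : ℕ => poch ((a:ℝ):ℂ) n / (Nat.factorial n) * bP p q a α β n x * t ^ n)
      SS := hfull.prod_fiberwise hLn
  -- STEP I : identify SS with the RHS
  set C : ℂ := (1 - t) ^ (-(a:ℂ)) with hC
  have hCne : C ≠ 0 := by
    rw [hC]
    intro h
    rw [Complex.cpow_eq_zero_iff] at h
    exact hne_t h.1
  have hgh : ∀ k : ℕ, c' k * (1 - t) ^ (-((a:ℂ) + 2*(k:ℂ)))
      = C * (poch ((a : ℂ)/2) k * poch (((a : ℂ)+1)/2) k * (∏ i, poch ((α i : ℝ):ℂ) k) /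
          (∏ j, poch ((β j : ℝ):ℂ) k) * (-(4*x*t/(1-t)^2)) ^ k / (Nat.factorial k)) := by
    intro k
    have hsplit : (1 - t) ^ (-((a:ℂ) + 2*(k:ℂ)))
        = C * ((1 - t) ^ (2*k : ℕ))⁻¹ := by
      rw [show -((a:ℂ) + 2*(k:ℂ)) = (-(a:ℂ)) + (-(((2*k : ℕ) : ℕ):ℂ)) by push_cast; ring,
        Complex.cpow_add _ _ hne_t, ← hC]
      congr 1
      rw [Complex.cpow_neg, Complex.cpow_natCast]
    have hpow : (-(4*x*t/(1-t)^2)) ^ k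
        = (-1)^k * (4^k * x^k * t^k) * (((1-t) ^ (2*k : ℕ)))⁻¹ := by
      rw [show -(4*x*t/(1-t)^2) = (-(4*x*t)) / ((1-t)^2) by ring, div_pow, ← pow_mul,
        neg_pow, div_eq_mul_inv, mul_pow, mul_pow]
    rw [hsplit, hc']
    simp only
    rw [show 2*k = 2*k from rfl, poch_two_mul, hpow, neg_pow t k]
    ring
  have hRHSsum : HasSum (fun k => C * (poch ((a : ℂ)/2) k * poch (((a : ℂ)+1)/2) k *
      (∏ i, poch ((α i : ℝ):ℂ) k) / (∏ j, poch ((β j : ℝ):ℂ) k) *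
      (-(4*x*t/(1-t)^2)) ^ k / (Nat.factorial k))) SS :=
    hg.congr_fun fun k => (hgh k).symm
  have hsummand : HasSum (fun k => poch ((a : ℂ)/2) k * poch (((a : ℂ)+1)/2) k *
      (∏ i, poch ((α i : ℝ):ℂ) k) / (∏ j, poch ((β j : ℝ):ℂ) k) *
      (-(4*x*t/(1-t)^2)) ^ k / (Nat.factorial k)) (C⁻¹ * SS) := by
    have h2 := hRHSsum.mul_left C⁻¹
    exact h2.congr_fun fun k => (inv_mul_cancel_left₀ hCne _).symm
  have hSSeq : C * (∑' k : ℕ, poch ((a : ℂ)/2) k * poch (((a : ℂ)+1)/2) k *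
      (∏ i, poch ((α i : ℝ):ℂ) k) / (∏ j, poch ((β j : ℝ):ℂ) k) *
      (-(4*x*t/(1-t)^2)) ^ k / (Nat.factorial k)) = SS := by
    rw [hsummand.tsum_eq, mul_inv_cancel_left₀ hCne]
  exact hSSeq ▸ hLHS
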